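/- (Theorem 3, KKT sufficiency) Fix N ≥ 1, B > 0, T > 0, F > 0, for each i reals 0 < a_{i1} ≤ a_{i2}, and for each (i,j) reals C_{ij} > 0, P_{ij} > 0, R_{ij} ≥ D_{ij} ≥ 0. Let V(d, t) = Σ_{i=1}^N B·t_i·(a_{i1}·2^((d_{i1}+d_{i2})/(B·t_i)) + (a_{i2} − a_{i1})·2^(d_{i2}/(B·t_i)) − a_{i2}) + Σ_{i,j} (R_{ij} − d_{ij})·C_{ij}·P_{ij}. Suppose (d*, t*) is feasible (t*_i > 0, Σ_i t*_i ≤ T, Σ_{i,j} d*_{ij}·C_{ij} ≤ F, D_{ij} ≤ d*_{ij} ≤ R_{ij}), and there exist α ≥ 0, β ≥ 0 with α·(Σ_i t*_i − T) = 0 and β·(Σ_{i,j} d*_{ij}·C_{ij} − F) = 0 such that for every i: ∂V/∂t_i(d*, t*) + α = 0; and for every (i,j), writing G_{ij} = ∂V/∂d_{ij}(d*, t*) + β·C_{ij}: G_{ij} = 0 if D_{ij} < d*_{ij} < R_{ij}, G_{ij} ≥ 0 if d*_{ij} = D_{ij}, and G_{ij} ≤ 0 if d*_{ij} = R_{ij}.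 Then (d*, t*) is a global minimizer: V(d*, t*) ≤ V(d, t) for every feasible (d, t). -/

import Mathlib

open Real Finset

noncomputable def psiD (s ds w dw : ℝ) : ℝ :=
  ds * (2:ℝ) ^ (w/s) + s * ((2:ℝ) ^ (w/s) * Real.log 2) * ((dw*s - w*ds)/s^2)

lemma psi_deriv (s0 ds w0 dw τ : ℝ) (h : s0 + τ*ds ≠ 0) :
    HasDerivAt (fun τ => (s0+τ*ds) * (2:ℝ) ^ ((w0+τ*dw)/(s0+τ*ds)))
      (psiD (s0+τ*ds) ds (w0+τ*dw) dw) τ := by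
  have hs : HasDerivAt (fun τ : ℝ => s0+τ*ds) ds τ := by
    simpa using ((hasDerivAt_id τ).mul_const ds).const_add s0
  have hw : HasDerivAt (fun τ : ℝ => w0+τ*dw) dw τ := by
    simpa using ((hasDerivAt_id τ).mul_const dw).const_add w0
  have hdiv := hw.div hs h
  have hr := ((hasStrictDerivAt_const_rpow (by norm_num : (0:ℝ) < 2)
      ((w0+τ*dw)/(s0+τ*ds))).hasDerivAt).comp τ hdiv
  have := hs.mul hr
  exact this.congr_deriv (by simp only [psiD, Function.comp_apply, Pi.div_apply]; ring)

noncomputable def Wg (B a1 a2 x y s : ℝ) : ℝ :=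
  B * s * (a1 * (2:ℝ) ^ ((x+y)/(B*s)) + (a2-a1) * (2:ℝ) ^ (y/(B*s)) - a2)

noncomputable def DWg (B a1 a2 x y s dx dy ds : ℝ) : ℝ :=
  a1 * psiD (B*s) (B*ds) (x+y) (dx+dy) + (a2-a1) * psiD (B*s) (B*ds) y dy - a2*(B*ds)

lemma Wg_path_deriv (B a1 a2 x0 dx y0 dy s0 ds τ : ℝ) (h : B*(s0+τ*ds) ≠ 0) :
    HasDerivAt (fun τ => Wg B a1 a2 (x0+τ*dx) (y0+τ*dy) (s0+τ*ds))
      (DWg B a1 a2 (x0+τ*dx) (y0+τ*dy) (s0+τ*ds) dx dy ds) τ := by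
  have h1 : B*s0 + τ*(B*ds) ≠ 0 := by rw [show B*s0 + τ*(B*ds) = B*(s0+τ*ds) by ring]; exact h
  have p1 := (psi_deriv (B*s0) (B*ds) (x0+y0) (dx+dy) τ h1).const_mul a1
  have p2 := (psi_deriv (B*s0) (B*ds) y0 dy τ h1).const_mul (a2-a1)
  have p3 : HasDerivAt (fun τ : ℝ => a2*(B*s0+τ*(B*ds))) (a2*(B*ds)) τ := by
    simpa using (((hasDerivAt_id τ).mul_const (B*ds)).const_add (B*s0)).const_mul a2
  have := (p1.add p2).sub p3
  have e1 : B*s0+τ*(B*ds) = B*(s0+τ*ds) := by ring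
  refine this.congr_of_eventuallyEq (Filter.Eventually.of_forall fun σ => ?_) |>.congr_deriv ?_
  · have f1 : B*s0+σ*(B*ds) = B*(s0+σ*ds) := by ring
    have f2 : (x0+y0)+σ*(dx+dy) = (x0+σ*dx)+(y0+σ*dy) := by ring
    simp only [Wg, Pi.add_apply, Pi.sub_apply]; rw [← f1, ← f2]; ring
  · have e2 : (x0+y0)+τ*(dx+dy) = (x0+τ*dx)+(y0+τ*dy) := by ring
    rw [DWg, e1, e2]

lemma persp_ineq (s1 s2 w1 w2 p q : ℝ) (hs1 : 0 < s1) (hs2 : 0 < s2)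
    (hp : 0 ≤ p) (hq : 0 ≤ q) (hpq : p + q = 1) :
    (p*s1+q*s2) * (2:ℝ) ^ ((p*w1+q*w2)/(p*s1+q*s2))
      ≤ p*(s1*(2:ℝ)^(w1/s1)) + q*(s2*(2:ℝ)^(w2/s2)) := by
  have hS : 0 < p*s1+q*s2 := by
    rcases eq_or_lt_of_le hp with h|h
    · have hq1 : q = 1 := by linarith
      nlinarith
    · nlinarith [mul_pos h hs1, mul_nonneg hq hs2.le]
  set S := p*s1+q*s2 with hSdef
  have hθ1 : 0 ≤ p*s1/S := by positivity
  have hθ2 : 0 ≤ q*s2/S := by positivity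
  have hθ : p*s1/S + q*s2/S = 1 := by field_simp; exact hSdef.symm
  have key := convexOn_exp.2 (Set.mem_univ (w1/s1*Real.log 2)) (Set.mem_univ (w2/s2*Real.log 2)) hθ1 hθ2 hθ
  simp only [smul_eq_mul] at key
  have e1 : p*s1/S * (w1/s1*Real.log 2) + q*s2/S * (w2/s2*Real.log 2)
      = (p*w1+q*w2)/S * Real.log 2 := by field_simp
  rw [e1] at key
  have h2 : ∀ x : ℝ, (2:ℝ)^x = Real.exp (x * Real.log 2) := fun x => by
    rw [Real.rpow_def_of_pos (by norm_num), mul_comm]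
  rw [h2, h2, h2]
  calc S * Real.exp ((p*w1+q*w2)/S * Real.log 2)
      ≤ S * (p*s1/S * Real.exp (w1/s1*Real.log 2) + q*s2/S * Real.exp (w2/s2*Real.log 2)) := by
        exact mul_le_mul_of_nonneg_left key hS.le
    _ = p*(s1*Real.exp (w1/s1*Real.log 2)) + q*(s2*Real.exp (w2/s2*Real.log 2)) := by
        field_simp

lemma Wg_chord (B a1 a2 x1 y1 s1 x2 y2 s2 p q : ℝ) (hB : 0 < B) (ha1 : 0 < a1)
    (h12 : a1 ≤ a2) (hs1 : 0 < s1) (hs2 : 0 < s2) (hp : 0 ≤ p) (hq : 0 ≤ q)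
    (hpq : p + q = 1) :
    Wg B a1 a2 (p*x1+q*x2) (p*y1+q*y2) (p*s1+q*s2)
      ≤ p * Wg B a1 a2 x1 y1 s1 + q * Wg B a1 a2 x2 y2 s2 := by
  have k1 := persp_ineq (B*s1) (B*s2) (x1+y1) (x2+y2) p q (by positivity) (by positivity) hp hq hpq
  have k2 := persp_ineq (B*s1) (B*s2) y1 y2 p q (by positivity) (by positivity) hp hq hpq
  have e1 : p*(B*s1)+q*(B*s2) = B*(p*s1+q*s2) := by ring
  have e2 : p*(x1+y1)+q*(x2+y2) = (p*x1+q*x2)+(p*y1+q*y2) := by ring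
  rw [e1, e2] at k1
  rw [e1] at k2
  simp only [Wg]
  nlinarith [mul_le_mul_of_nonneg_left k1 ha1.le, mul_le_mul_of_nonneg_left k2 (by linarith : (0:ℝ) ≤ a2 - a1)]

lemma slope_limit (Φ : ℝ → ℝ) (m : ℝ) (hd : HasDerivAt Φ m 0)
    (hc : ∀ τ ∈ Set.Ioc (0:ℝ) 1, Φ τ ≤ (1-τ) * Φ 0 + τ * Φ 1) :
    Φ 0 + m ≤ Φ 1 := by
  have hdw : HasDerivWithinAt Φ m (Set.Ioi 0) 0 := hd.hasDerivWithinAt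
  rw [hasDerivWithinAt_iff_tendsto_slope] at hdw
  have hsub : Set.Ioi (0:ℝ) \ {0} = Set.Ioi 0 :=
    Set.diff_singleton_eq_self (by simp)
  rw [hsub] at hdw
  have hle : m ≤ Φ 1 - Φ 0 := by
    refine le_of_tendsto hdw ?_
    filter_upwards [Ioc_mem_nhdsGT_of_mem (Set.mem_Ico.2 ⟨le_refl (0:ℝ), zero_lt_one⟩)] with τ hτ
    have h0 : 0 < τ := hτ.1
    rw [slope_def_field, sub_zero, div_le_iff₀ h0]
    nlinarith [hc τ hτ]
  linarith

lemma hasDerivAt_affine (c k τ : ℝ) : HasDerivAt (fun τ : ℝ => c + τ*k) k τ := by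
  simpa using ((hasDerivAt_id τ).mul_const k).const_add c

lemma sum_update_apply {N : ℕ} {α : Type*} (g : Fin N → α → ℝ) (f : Fin N → α)
    (i : Fin N) (a : α) :
    ∑ k, g k (Function.update f i a k)
      = g i a + ∑ k ∈ Finset.univ \ {i}, g k (f k) := by
  have h : (fun k => g k (Function.update f i a k))
      = Function.update (fun k => g k (f k)) i (g i a) := by
    funext k
    rcases eq_or_ne k i with rfl|h
    · simp
    · simp [Function.update_of_ne h]
  calc ∑ k, g k (Function.update f i a k)
      = ∑ k, Function.update (fun k => g k (f k)) i (g i a) k := by rw [h]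
    _ = _ := Finset.sum_update_of_mem (Finset.mem_univ i) _ _

lemma DWg_linear (B a1 a2 x y s dx dy ds : ℝ) :
    DWg B a1 a2 x y s dx dy ds =
      dx * DWg B a1 a2 x y s 1 0 0 + dy * DWg B a1 a2 x y s 0 1 0
        + ds * DWg B a1 a2 x y s 0 0 1 := by
  simp only [DWg, psiD]; ring
theorem stmt_17 (N : ℕ) (hN : 1 ≤ N) (B T F : ℝ)
    (hB : 0 < B) (hT : 0 < T) (hF : 0 < F)
    (a₁ a₂ : Fin N → ℝ) (ha₁ : ∀ i, 0 < a₁ i) (h12 : ∀ i, a₁ i ≤ a₂ i)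
    (C P R D : Fin N → Fin 2 → ℝ)
    (hC : ∀ i j, 0 < C i j) (hP : ∀ i j, 0 < P i j)
    (hD : ∀ i j, 0 ≤ D i j) (hDR : ∀ i j, D i j ≤ R i j)
    (V : (Fin N → Fin 2 → ℝ) → (Fin N → ℝ) → ℝ)
    (hV : ∀ (d : Fin N → Fin 2 → ℝ) (t : Fin N → ℝ), V d t =
      (∑ i, B * t i * (a₁ i * (2 : ℝ) ^ ((d i 0 + d i 1) / (B * t i))
        + (a₂ i - a₁ i) * (2 : ℝ) ^ (d i 1 / (B * t i)) - a₂ i))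
      + ∑ i, ∑ j, (R i j - d i j) * C i j * P i j)
    (dstar : Fin N → Fin 2 → ℝ) (tstar : Fin N → ℝ)
    (htstar : ∀ i, 0 < tstar i) (htsum : ∑ i, tstar i ≤ T)
    (hcap : ∑ i, ∑ j, dstar i j * C i j ≤ F)
    (hbox : ∀ i j, D i j ≤ dstar i j ∧ dstar i j ≤ R i j)
    (α β : ℝ) (hα0 : 0 ≤ α) (hβ0 : 0 ≤ β)
    (hslackα : α * ((∑ i, tstar i) - T) = 0)
    (hslackβ : β * ((∑ i, ∑ j, dstar i j * C i j) - F) = 0)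
    (hKt : ∀ i, HasDerivAt (fun s => V dstar (Function.update tstar i s))
      (-α) (tstar i))
    (hKd : ∀ i j, ∃ G : ℝ,
      HasDerivAt
        (fun x => V (Function.update dstar i (Function.update (dstar i) j x)) tstar)
        (G - β * C i j) (dstar i j) ∧
      (D i j < dstar i j → dstar i j < R i j → G = 0) ∧
      (dstar i j = D i j → 0 ≤ G) ∧
      (dstar i j = R i j → G ≤ 0)) :
    ∀ (d : Fin N → Fin 2 → ℝ) (t : Fin N → ℝ),
      (∀ i, 0 < t i) → (∑ i, t i ≤ T) →
      (∑ i, ∑ j, d i j * C i j ≤ F) →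
      (∀ i j, D i j ≤ d i j ∧ d i j ≤ R i j) →
      V dstar tstar ≤ V d t := by
  intro d t ht htT hdF hbox'
  have hVW : ∀ (dd : Fin N → Fin 2 → ℝ) (tt : Fin N → ℝ), V dd tt =
      (∑ i, Wg B (a₁ i) (a₂ i) (dd i 0) (dd i 1) (tt i))
      + ∑ i, ∑ j, (R i j - dd i j) * C i j * P i j := by
    intro dd tt; rw [hV]; simp only [Wg]
  have hBt : ∀ i : Fin N, B * tstar i ≠ 0 := fun i => ne_of_gt (mul_pos hB (htstar i))
  -- partial derivative values at the star point
  set px : Fin N → ℝ := fun i =>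
    DWg B (a₁ i) (a₂ i) (dstar i 0) (dstar i 1) (tstar i) 1 0 0 with hpxd
  set py : Fin N → ℝ := fun i =>
    DWg B (a₁ i) (a₂ i) (dstar i 0) (dstar i 1) (tstar i) 0 1 0 with hpyd
  set pt : Fin N → ℝ := fun i =>
    DWg B (a₁ i) (a₂ i) (dstar i 0) (dstar i 1) (tstar i) 0 0 1 with hptd
  -- stationarity in t
  have hpt : ∀ i, -α = pt i := by
    intro i
    have base := Wg_path_deriv B (a₁ i) (a₂ i) (dstar i 0) 0 (dstar i 1) 0 0 1
      (tstar i) (by simpa using hBt i)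
    have base' : HasDerivAt (fun s : ℝ => Wg B (a₁ i) (a₂ i) (dstar i 0) (dstar i 1) s)
        (pt i) (tstar i) := by
      simpa [hptd] using base
    have comb := base'.add_const
      ((∑ k ∈ Finset.univ \ {i}, Wg B (a₁ k) (a₂ k) (dstar k 0) (dstar k 1) (tstar k))
        + ∑ k, ∑ l, (R k l - dstar k l) * C k l * P k l)
    have hfun : (fun s => V dstar (Function.update tstar i s))
        = fun s => Wg B (a₁ i) (a₂ i) (dstar i 0) (dstar i 1) s
          + ((∑ k ∈ Finset.univ \ {i}, Wg B (a₁ k) (a₂ k) (dstar k 0) (dstar k 1) (tstar k))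
            + ∑ k, ∑ l, (R k l - dstar k l) * C k l * P k l) := by
      funext s
      rw [hVW dstar (Function.update tstar i s),
        sum_update_apply (fun k u => Wg B (a₁ k) (a₂ k) (dstar k 0) (dstar k 1) u) tstar i s]
      ring
    have comb' : HasDerivAt (fun s => V dstar (Function.update tstar i s)) (pt i)
        (tstar i) := by
      rw [hfun]; exact comb
    exact (hKt i).unique comb'
  -- stationarity in d
  have hpd0 : ∀ i, HasDerivAt
      (fun x => V (Function.update dstar i (Function.update (dstar i) 0 x)) tstar)
      (px i - C i 0 * P i 0) (dstar i 0) := by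
    intro i
    have base := Wg_path_deriv B (a₁ i) (a₂ i) 0 1 (dstar i 1) 0 (tstar i) 0
      (dstar i 0) (by simpa using hBt i)
    have base' : HasDerivAt (fun x : ℝ => Wg B (a₁ i) (a₂ i) x (dstar i 1) (tstar i))
        (px i) (dstar i 0) := by
      simpa [hpxd] using base
    have lin : HasDerivAt (fun x : ℝ => (R i 0 - x) * C i 0 * P i 0)
        (-(C i 0 * P i 0)) (dstar i 0) := by
      refine (hasDerivAt_affine (R i 0 * C i 0 * P i 0) (-(C i 0 * P i 0)) (dstar i 0)).congr_of_eventuallyEq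
        (Filter.Eventually.of_forall fun x => by ring)
    have comb := (base'.add lin).add_const
      ((∑ k ∈ Finset.univ \ {i}, Wg B (a₁ k) (a₂ k) (dstar k 0) (dstar k 1) (tstar k))
        + ((R i 1 - dstar i 1) * C i 1 * P i 1
          + ∑ k ∈ Finset.univ \ {i}, ∑ l, (R k l - dstar k l) * C k l * P k l))
    have e1 := fun u : Fin 2 → ℝ => sum_update_apply
      (fun k (w : Fin 2 → ℝ) => Wg B (a₁ k) (a₂ k) (w 0) (w 1) (tstar k)) dstar i u
    have e2 := fun u : Fin 2 → ℝ => sum_update_apply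
      (fun k (w : Fin 2 → ℝ) => ∑ l, (R k l - w l) * C k l * P k l) dstar i u
    have hfun : (fun x => V (Function.update dstar i (Function.update (dstar i) 0 x)) tstar)
        = fun x => (Wg B (a₁ i) (a₂ i) x (dstar i 1) (tstar i) + (R i 0 - x) * C i 0 * P i 0)
          + ((∑ k ∈ Finset.univ \ {i}, Wg B (a₁ k) (a₂ k) (dstar k 0) (dstar k 1) (tstar k))
            + ((R i 1 - dstar i 1) * C i 1 * P i 1
              + ∑ k ∈ Finset.univ \ {i}, ∑ l, (R k l - dstar k l) * C k l * P k l)) := by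
      funext x
      rw [hVW, e1 (Function.update (dstar i) 0 x), e2 (Function.update (dstar i) 0 x)]
      simp only [Fin.sum_univ_two, Function.update_self,
        Function.update_of_ne (show (1 : Fin 2) ≠ 0 by decide)]
      ring
    rw [hfun]
    exact comb.congr_deriv (by ring)
  have hpd1 : ∀ i, HasDerivAt
      (fun x => V (Function.update dstar i (Function.update (dstar i) 1 x)) tstar)
      (py i - C i 1 * P i 1) (dstar i 1) := by
    intro i
    have base := Wg_path_deriv B (a₁ i) (a₂ i) (dstar i 0) 0 0 1 (tstar i) 0
      (dstar i 1) (by simpa using hBt i)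
    have base' : HasDerivAt (fun x : ℝ => Wg B (a₁ i) (a₂ i) (dstar i 0) x (tstar i))
        (py i) (dstar i 1) := by
      simpa [hpyd] using base
    have lin : HasDerivAt (fun x : ℝ => (R i 1 - x) * C i 1 * P i 1)
        (-(C i 1 * P i 1)) (dstar i 1) := by
      refine (hasDerivAt_affine (R i 1 * C i 1 * P i 1) (-(C i 1 * P i 1)) (dstar i 1)).congr_of_eventuallyEq
        (Filter.Eventually.of_forall fun x => by ring)
    have comb := (base'.add lin).add_const
      ((∑ k ∈ Finset.univ \ {i}, Wg B (a₁ k) (a₂ k) (dstar k 0) (dstar k 1) (tstar k))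
        + ((R i 0 - dstar i 0) * C i 0 * P i 0
          + ∑ k ∈ Finset.univ \ {i}, ∑ l, (R k l - dstar k l) * C k l * P k l))
    have e1 := fun u : Fin 2 → ℝ => sum_update_apply
      (fun k (w : Fin 2 → ℝ) => Wg B (a₁ k) (a₂ k) (w 0) (w 1) (tstar k)) dstar i u
    have e2 := fun u : Fin 2 → ℝ => sum_update_apply
      (fun k (w : Fin 2 → ℝ) => ∑ l, (R k l - w l) * C k l * P k l) dstar i u
    have hfun : (fun x => V (Function.update dstar i (Function.update (dstar i) 1 x)) tstar)
        = fun x => (Wg B (a₁ i) (a₂ i) (dstar i 0) x (tstar i) + (R i 1 - x) * C i 1 * P i 1)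
          + ((∑ k ∈ Finset.univ \ {i}, Wg B (a₁ k) (a₂ k) (dstar k 0) (dstar k 1) (tstar k))
            + ((R i 0 - dstar i 0) * C i 0 * P i 0
              + ∑ k ∈ Finset.univ \ {i}, ∑ l, (R k l - dstar k l) * C k l * P k l)) := by
      funext x
      rw [hVW, e1 (Function.update (dstar i) 1 x), e2 (Function.update (dstar i) 1 x)]
      simp only [Fin.sum_univ_two, Function.update_self,
        Function.update_of_ne (show (0 : Fin 2) ≠ 1 by decide)]
      ring
    rw [hfun]
    exact comb.congr_deriv (by ring)
  -- the KKT multipliers G, expressed through our partials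
  set Gv : Fin N → Fin 2 → ℝ := fun i =>
    ![px i - C i 0 * P i 0 + β * C i 0, py i - C i 1 * P i 1 + β * C i 1] with hGvd
  have hGsign : ∀ i j, 0 ≤ (d i j - dstar i j) * Gv i j := by
    intro i j
    obtain ⟨G, hG, hs1, hs2, hs3⟩ := hKd i j
    have hj : j = 0 ∨ j = 1 := by
      rcases j with ⟨_|_|n, hn⟩
      · exact Or.inl rfl
      · exact Or.inr rfl
      · exact absurd hn (by omega)
    have hGval : G = Gv i j := by
      rcases hj with rfl|rfl
      · have h := hG.unique (hpd0 i)
        simp only [hGvd, Matrix.cons_val_zero]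
        linarith
      · have h := hG.unique (hpd1 i)
        simp only [hGvd, Matrix.cons_val_one, Matrix.head_cons, Matrix.cons_val_zero]
        linarith
    rw [← hGval]
    rcases eq_or_lt_of_le (hbox i j).1 with hlo|hlo
    · have hg := hs2 hlo.symm
      have : D i j ≤ d i j := (hbox' i j).1
      nlinarith
    · rcases eq_or_lt_of_le (hbox i j).2 with hhi|hhi
      · have hg := hs3 hhi
        have : d i j ≤ R i j := (hbox' i j).2
        nlinarith
      · rw [hs1 hlo hhi]; simp
  -- the path function
  set Φ : ℝ → ℝ := fun τ => V (fun i j => dstar i j + τ * (d i j - dstar i j))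
      (fun i => tstar i + τ * (t i - tstar i)) with hΦd
  have hΦ : ∀ τ : ℝ, Φ τ =
      (∑ i, Wg B (a₁ i) (a₂ i) (dstar i 0 + τ * (d i 0 - dstar i 0))
        (dstar i 1 + τ * (d i 1 - dstar i 1)) (tstar i + τ * (t i - tstar i)))
      + ∑ i, ∑ j, (R i j - (dstar i j + τ * (d i j - dstar i j))) * C i j * P i j := by
    intro τ
    simp only [hΦd]
    exact hVW _ _
  have hΦ0 : Φ 0 = V dstar tstar := by
    simp only [hΦd]
    congr 1
    · funext i j; ring
    · funext i; ring
  have hΦ1 : Φ 1 = V d t := by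
    simp only [hΦd]
    congr 1
    · funext i j; ring
    · funext i; ring
  -- chord inequality (convexity along the segment)
  have hchord : ∀ τ ∈ Set.Ioc (0:ℝ) 1, Φ τ ≤ (1 - τ) * Φ 0 + τ * Φ 1 := by
    intro τ hτ
    obtain ⟨hτ0, hτ1⟩ := hτ
    rw [hΦ τ, hΦ 0, hΦ 1]
    have hlin : (∑ i, ∑ j, (R i j - (dstar i j + τ * (d i j - dstar i j))) * C i j * P i j)
        = (1 - τ) * (∑ i, ∑ j, (R i j - (dstar i j + 0 * (d i j - dstar i j))) * C i j * P i j)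
          + τ * (∑ i, ∑ j, (R i j - (dstar i j + 1 * (d i j - dstar i j))) * C i j * P i j) := by
      rw [Finset.mul_sum, Finset.mul_sum, ← Finset.sum_add_distrib]
      refine Finset.sum_congr rfl fun i _ => ?_
      rw [Finset.mul_sum, Finset.mul_sum, ← Finset.sum_add_distrib]
      exact Finset.sum_congr rfl fun j _ => by ring
    have hsum : (∑ i, Wg B (a₁ i) (a₂ i) (dstar i 0 + τ * (d i 0 - dstar i 0))
          (dstar i 1 + τ * (d i 1 - dstar i 1)) (tstar i + τ * (t i - tstar i)))
        ≤ (1 - τ) * (∑ i, Wg B (a₁ i) (a₂ i) (dstar i 0 + 0 * (d i 0 - dstar i 0))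
            (dstar i 1 + 0 * (d i 1 - dstar i 1)) (tstar i + 0 * (t i - tstar i)))
          + τ * (∑ i, Wg B (a₁ i) (a₂ i) (dstar i 0 + 1 * (d i 0 - dstar i 0))
            (dstar i 1 + 1 * (d i 1 - dstar i 1)) (tstar i + 1 * (t i - tstar i))) := by
      rw [Finset.mul_sum, Finset.mul_sum, ← Finset.sum_add_distrib]
      refine Finset.sum_le_sum fun i _ => ?_
      have key := Wg_chord B (a₁ i) (a₂ i) (dstar i 0) (dstar i 1) (tstar i)
        (d i 0) (d i 1) (t i) (1 - τ) τ hB (ha₁ i) (h12 i) (htstar i) (ht i)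
        (by linarith) hτ0.le (by ring)
      rw [show dstar i 0 + τ * (d i 0 - dstar i 0) = (1-τ) * dstar i 0 + τ * d i 0 from by ring,
        show dstar i 1 + τ * (d i 1 - dstar i 1) = (1-τ) * dstar i 1 + τ * d i 1 from by ring,
        show tstar i + τ * (t i - tstar i) = (1-τ) * tstar i + τ * t i from by ring,
        show dstar i 0 + 0 * (d i 0 - dstar i 0) = dstar i 0 from by ring,
        show dstar i 1 + 0 * (d i 1 - dstar i 1) = dstar i 1 from by ring,
        show tstar i + 0 * (t i - tstar i) = tstar i from by ring,
        show dstar i 0 + 1 * (d i 0 - dstar i 0) = d i 0 from by ring,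
        show dstar i 1 + 1 * (d i 1 - dstar i 1) = d i 1 from by ring,
        show tstar i + 1 * (t i - tstar i) = t i from by ring]
      exact key
    linarith [hsum, hlin]
  -- derivative of the path at 0
  set M : ℝ := (∑ i, DWg B (a₁ i) (a₂ i) (dstar i 0) (dstar i 1) (tstar i)
      (d i 0 - dstar i 0) (d i 1 - dstar i 1) (t i - tstar i))
    + ∑ i, ∑ j, -((d i j - dstar i j) * (C i j * P i j)) with hMd
  have hder : HasDerivAt Φ M 0 := by
    rw [show Φ = (fun τ => (∑ i, Wg B (a₁ i) (a₂ i) (dstar i 0 + τ * (d i 0 - dstar i 0))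
        (dstar i 1 + τ * (d i 1 - dstar i 1)) (tstar i + τ * (t i - tstar i)))
      + ∑ i, ∑ j, (R i j - (dstar i j + τ * (d i j - dstar i j))) * C i j * P i j)
        from funext hΦ, hMd]
    refine HasDerivAt.add (HasDerivAt.fun_sum fun i _ => ?_)
      (HasDerivAt.fun_sum fun i _ => HasDerivAt.fun_sum fun j _ => ?_)
    · have base := Wg_path_deriv B (a₁ i) (a₂ i) (dstar i 0) (d i 0 - dstar i 0)
        (dstar i 1) (d i 1 - dstar i 1) (tstar i) (t i - tstar i) 0 (by simpa using hBt i)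
      simpa using base
    · exact (hasDerivAt_affine ((R i j - dstar i j) * C i j * P i j)
        (-((d i j - dstar i j) * (C i j * P i j))) 0).congr_of_eventuallyEq
        (Filter.Eventually.of_forall fun τ => by ring)
  -- rewrite M via the KKT data
  have hMval : M = (∑ i, ((d i 0 - dstar i 0) * Gv i 0 + (d i 1 - dstar i 1) * Gv i 1))
      + (-β) * (∑ i, ((d i 0 - dstar i 0) * C i 0 + (d i 1 - dstar i 1) * C i 1))
      + (-α) * (∑ i, (t i - tstar i)) := by
    rw [hMd]
    simp only [Fin.sum_univ_two]
    rw [Finset.mul_sum, Finset.mul_sum, ← Finset.sum_add_distrib, ← Finset.sum_add_distrib,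
      ← Finset.sum_add_distrib]
    refine Finset.sum_congr rfl fun i _ => ?_
    have epx : DWg B (a₁ i) (a₂ i) (dstar i 0) (dstar i 1) (tstar i) 1 0 0 = px i := by
      rw [hpxd]
    have epy : DWg B (a₁ i) (a₂ i) (dstar i 0) (dstar i 1) (tstar i) 0 1 0 = py i := by
      rw [hpyd]
    have ept : DWg B (a₁ i) (a₂ i) (dstar i 0) (dstar i 1) (tstar i) 0 0 1 = pt i := by
      rw [hptd]
    have h0 : Gv i 0 = px i - C i 0 * P i 0 + β * C i 0 := by simp [hGvd]
    have h1 : Gv i 1 = py i - C i 1 * P i 1 + β * C i 1 := by simp [hGvd]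
    rw [DWg_linear, epx, epy, ept, ← hpt i, h0, h1]
    ring
  have hsb : (∑ i, ((d i 0 - dstar i 0) * C i 0 + (d i 1 - dstar i 1) * C i 1))
      = (∑ i, ∑ j, d i j * C i j) - (∑ i, ∑ j, dstar i j * C i j) := by
    rw [← Finset.sum_sub_distrib]
    refine Finset.sum_congr rfl fun i _ => ?_
    simp only [Fin.sum_univ_two]
    ring
  have hsa : (∑ i, (t i - tstar i)) = (∑ i, t i) - (∑ i, tstar i) := Finset.sum_sub_distrib _ _
  have hM0 : 0 ≤ M := by
    rw [hMval, hsb, hsa]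
    have h1 : 0 ≤ ∑ i, ((d i 0 - dstar i 0) * Gv i 0 + (d i 1 - dstar i 1) * Gv i 1) :=
      Finset.sum_nonneg fun i _ => add_nonneg (hGsign i 0) (hGsign i 1)
    have h2 : β * (∑ i, ∑ j, d i j * C i j) ≤ β * F := mul_le_mul_of_nonneg_left hdF hβ0
    have h3 : α * (∑ i, t i) ≤ α * T := mul_le_mul_of_nonneg_left htT hα0
    nlinarith [hslackα, hslackβ]
  have key := slope_limit Φ M hder hchord
  rw [hΦ0, hΦ1] at key
  linarith
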